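/- Let μ := δ_0 and, for α ∈ (0,1), let ν^α := (1−α)·δ_{−α²} + α·δ_1. Then I(ν^α,ν^α) = ν^α, I(μ,ν^α) = δ_{α(1−α(1−α))}, W_1(I(ν^α,ν^α), I(μ,ν^α)) = 2(α + α²(α(1−α) − 1)), W_1(μ,ν^α) = α + α²(1−α), and lim_{α→0⁺} W_1(I(ν^α,ν^α), I(μ,ν^α)) / W_1(μ,ν^α) = 2. In particular, the factor 2 multiplying W_1(μ,μ') in the Lipschitz bound W_1(I(μ,ν),I(μ',ν')) ≤ 2W_1(μ,μ') + W_1(ν,ν') is optimal. -/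

import Mathlib

open MeasureTheory Filter Set

noncomputable section

/-- The quantile function of a measure `μ` on `ℝ`:
`F_μ^{-1}(u) = inf {x : μ((-∞, x]) ≥ u}`. -/
def quantile (μ : Measure ℝ) (u : ℝ) : ℝ :=
  sInf {x : ℝ | u ≤ (μ (Iic x)).toReal}

/-- The `p`-Wasserstein distance on the real line, expressed via quantile functions. -/
def Wp (p : ℝ) (μ ν : Measure ℝ) : ℝ :=
  (∫ u in Ioo (0:ℝ) 1, |quantile μ u - quantile ν u| ^ p) ^ (1 / p)

/-- `μ ∈ P_p(ℝ)`: a Borel probability measure on `ℝ` with finite `p`-th moment. -/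
def MemPp (p : ℝ) (μ : Measure ℝ) : Prop :=
  IsProbabilityMeasure μ ∧ Integrable (fun x => |x| ^ p) μ

/-- The convex hull of a function `F` on a set `S`: the greatest convex function on `S`
bounded above by `F` (pointwise supremum of all convex minorants). -/
def convexHullFn (S : Set ℝ) (F : ℝ → ℝ) : ℝ → ℝ :=
  fun x => sSup {y : ℝ | ∃ g : ℝ → ℝ, ConvexOn ℝ S g ∧ (∀ z ∈ S, g z ≤ F z) ∧ y = g x}

/-- Left-hand derivative. -/
def leftDeriv (f : ℝ → ℝ) (x : ℝ) : ℝ := derivWithin f (Iio x) x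

/-- Right-hand derivative. -/
def rightDeriv (f : ℝ → ℝ) (x : ℝ) : ℝ := derivWithin f (Ioi x) x

/-- `G(v) = ∫₀^v (F_μ^{-1}(u) - F_ν^{-1}(u)) du`. -/
def Gfun (μ ν : Measure ℝ) (v : ℝ) : ℝ :=
  ∫ u in Ioo (0:ℝ) v, (quantile μ u - quantile ν u)

/-- The Wasserstein projection `I(μ,ν)`: the image of Lebesgue measure on `(0,1)` under
`u ↦ F_μ^{-1}(u) - ∂₋ co(G)(u)`. -/
def proj_I (μ ν : Measure ℝ) : Measure ℝ :=
  Measure.map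
    (fun u => quantile μ u - leftDeriv (convexHullFn (Icc 0 1) (Gfun μ ν)) u)
    (volume.restrict (Ioo (0:ℝ) 1))

/-- The Wasserstein projection `J(μ,ν)`: the image of Lebesgue measure on `(0,1)` under
`u ↦ F_ν^{-1}(u) + ∂₋ co(G)(u)`. -/
def proj_J (μ ν : Measure ℝ) : Measure ℝ :=
  Measure.map
    (fun u => quantile ν u + leftDeriv (convexHullFn (Icc 0 1) (Gfun μ ν)) u)
    (volume.restrict (Ioo (0:ℝ) 1))

/-- The convex order `μ ≤_c ν`. -/
def ConvexOrder (μ ν : Measure ℝ) : Prop :=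
  ∀ f : ℝ → ℝ, ConvexOn ℝ univ f → Integrable f μ → Integrable f ν →
    ∫ x, f x ∂μ ≤ ∫ x, f x ∂ν

/-- `f` is càdlàg on `[a,b]`: right-continuous on `[a,b)` and with left limits on `(a,b]`. -/
def Cadlag (f : ℝ → ℝ) (a b : ℝ) : Prop :=
  (∀ x ∈ Ico a b, Tendsto f (nhdsWithin x (Ici x)) (nhds (f x))) ∧
  (∀ x ∈ Ioc a b, ∃ l : ℝ, Tendsto f (nhdsWithin x (Iio x)) (nhds l))

section Aux

lemma quantile_dirac (a : ℝ) {u : ℝ} (h0 : 0 < u) (h1 : u ≤ 1) :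
    quantile (Measure.dirac a) u = a := by
  have hset : {x : ℝ | u ≤ ((Measure.dirac a) (Iic x)).toReal} = Ici a := by
    ext x
    simp only [Measure.dirac_apply' _ measurableSet_Iic, mem_setOf_eq, mem_Ici]
    by_cases hx : a ≤ x
    · simp [indicator_of_mem (mem_Iic.2 hx), h1, hx]
    · simp [indicator_of_notMem (fun h => hx (mem_Iic.1 h)), hx, not_le.1, h0, not_le]
  rw [quantile, hset, csInf_Ici]

lemma nu_Iic (α x : ℝ) (h0 : 0 ≤ α) (h1 : α ≤ 1) :
    ((ENNReal.ofReal (1 - α) • Measure.dirac (-α ^ 2)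
      + ENNReal.ofReal α • Measure.dirac 1 : Measure ℝ) (Iic x)).toReal
    = (if -α^2 ≤ x then 1-α else 0) + (if (1:ℝ) ≤ x then α else 0) := by
  rw [Measure.add_apply, Measure.smul_apply, Measure.smul_apply,
    Measure.dirac_apply' _ measurableSet_Iic, Measure.dirac_apply' _ measurableSet_Iic]
  rw [ENNReal.toReal_add]
  · congr 1
    · by_cases hx : -α^2 ≤ x
      · simp only [indicator_of_mem (mem_Iic.2 hx), hx, if_true, smul_eq_mul, mul_one,
          Pi.one_apply]
        exact ENNReal.toReal_ofReal (by linarith)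
      · simp [indicator_of_notMem (fun h => hx (mem_Iic.1 h)), hx]
    · by_cases hx : (1:ℝ) ≤ x
      · simp only [indicator_of_mem (mem_Iic.2 hx), hx, if_true, smul_eq_mul, mul_one,
          Pi.one_apply]
        exact ENNReal.toReal_ofReal h0
      · simp [indicator_of_notMem (fun h => hx (mem_Iic.1 h)), hx]
  · exact ENNReal.mul_ne_top ENNReal.ofReal_ne_top (by simp [indicator]; split <;> simp)
  · exact ENNReal.mul_ne_top ENNReal.ofReal_ne_top (by simp [indicator]; split <;> simp)

lemma quantile_nu_low {α u : ℝ} (hα : α ∈ Ioo (0:ℝ) 1) (h0 : 0 < u) (h1 : u ≤ 1 - α) :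
    quantile (ENNReal.ofReal (1 - α) • Measure.dirac (-α ^ 2)
      + ENNReal.ofReal α • Measure.dirac 1) u = -α^2 := by
  obtain ⟨ha0, ha1⟩ := hα
  have hset : {x : ℝ | u ≤ ((ENNReal.ofReal (1 - α) • Measure.dirac (-α ^ 2)
      + ENNReal.ofReal α • Measure.dirac 1 : Measure ℝ) (Iic x)).toReal} = Ici (-α^2) := by
    ext x
    rw [mem_setOf_eq, nu_Iic α x ha0.le ha1.le, mem_Ici]
    constructor
    · intro h
      by_contra hx
      rw [if_neg hx, if_neg (by push_neg at hx ⊢; nlinarith)] at h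
      linarith
    · intro hx
      rw [if_pos hx]
      split <;> linarith
  rw [quantile, hset, csInf_Ici]

lemma quantile_nu_high {α u : ℝ} (hα : α ∈ Ioo (0:ℝ) 1) (h0 : 1 - α < u) (h1 : u ≤ 1) :
    quantile (ENNReal.ofReal (1 - α) • Measure.dirac (-α ^ 2)
      + ENNReal.ofReal α • Measure.dirac 1) u = 1 := by
  obtain ⟨ha0, ha1⟩ := hα
  have hset : {x : ℝ | u ≤ ((ENNReal.ofReal (1 - α) • Measure.dirac (-α ^ 2)
      + ENNReal.ofReal α • Measure.dirac 1 : Measure ℝ) (Iic x)).toReal} = Ici 1 := by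
    ext x
    rw [mem_setOf_eq, nu_Iic α x ha0.le ha1.le, mem_Ici]
    constructor
    · intro h
      by_contra hx
      rw [if_neg hx] at h
      split at h <;> linarith
    · intro hx
      rw [if_pos hx, if_pos (by nlinarith)]
      linarith
  rw [quantile, hset, csInf_Ici]

lemma convexOn_linear (c : ℝ) (S : Set ℝ) (hS : Convex ℝ S) :
    ConvexOn ℝ S (fun x => c * x) := by
  refine ⟨hS, fun x _ y _ a b _ _ _ => ?_⟩
  simp only [smul_eq_mul]
  ring_nf
  exact le_refl _

lemma hull_line {F : ℝ → ℝ} {c : ℝ} (hF0 : F 0 = 0) (hF1 : F 1 = c)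
    (hlow : ∀ x ∈ Icc (0:ℝ) 1, c * x ≤ F x) :
    ∀ x ∈ Icc (0:ℝ) 1, convexHullFn (Icc 0 1) F x = c * x := by
  intro x hx
  have hmem : c * x ∈ {y : ℝ | ∃ g : ℝ → ℝ, ConvexOn ℝ (Icc (0:ℝ) 1) g ∧
      (∀ z ∈ Icc (0:ℝ) 1, g z ≤ F z) ∧ y = g x} :=
    ⟨fun z => c * z, convexOn_linear c _ (convex_Icc 0 1), hlow, rfl⟩
  have hub : ∀ y ∈ {y : ℝ | ∃ g : ℝ → ℝ, ConvexOn ℝ (Icc (0:ℝ) 1) g ∧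
      (∀ z ∈ Icc (0:ℝ) 1, g z ≤ F z) ∧ y = g x}, y ≤ c * x := by
    rintro y ⟨g, hg, hgle, rfl⟩
    have h0 : (0:ℝ) ∈ Icc (0:ℝ) 1 := by constructor <;> norm_num
    have h1 : (1:ℝ) ∈ Icc (0:ℝ) 1 := by constructor <;> norm_num
    have := hg.2 h0 h1 (by linarith [hx.2] : (0:ℝ) ≤ 1 - x) (hx.1) (by ring)
    simp only [smul_eq_mul, mul_zero, mul_one, smul_zero, zero_add] at this
    calc g x ≤ (1-x) * g 0 + x * g 1 := by simpa using this
      _ ≤ (1-x) * F 0 + x * F 1 := by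
          have := hgle 0 h0; have := hgle 1 h1
          have hx1 : 0 ≤ 1 - x := by linarith [hx.2]
          nlinarith [hx.1]
      _ = c * x := by rw [hF0, hF1]; ring
  exact le_antisymm (csSup_le ⟨_, hmem⟩ hub) (le_csSup ⟨c * x, hub⟩ hmem)

lemma leftDeriv_hull_line {F : ℝ → ℝ} {c : ℝ} (hF0 : F 0 = 0) (hF1 : F 1 = c)
    (hlow : ∀ x ∈ Icc (0:ℝ) 1, c * x ≤ F x) {u : ℝ} (hu : u ∈ Ioo (0:ℝ) 1) :
    leftDeriv (convexHullFn (Icc 0 1) F) u = c := by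
  have heq := hull_line hF0 hF1 hlow
  have hmem : Ioo (0:ℝ) u ∈ nhdsWithin u (Iio u) :=
    mem_nhdsWithin.2 ⟨Ioi 0, isOpen_Ioi, hu.1, fun x hx => ⟨hx.1, hx.2⟩⟩
  have hee : convexHullFn (Icc 0 1) F =ᶠ[nhdsWithin u (Iio u)] fun x => c * x :=
    Filter.eventuallyEq_of_mem hmem (fun x hx => heq x ⟨hx.1.le, le_trans hx.2.le hu.2.le⟩)
  rw [leftDeriv, hee.derivWithin_eq (heq u ⟨hu.1.le, hu.2.le⟩)]
  exact (((hasDerivAt_id u).const_mul c).hasDerivWithinAt.derivWithin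
    (uniqueDiffWithinAt_Iio u)).trans (mul_one c)

lemma integrableOn_of_eq_const {f : ℝ → ℝ} {s : Set ℝ} (hs : MeasurableSet s)
    (hvol : volume s < ⊤) {c : ℝ} (h : ∀ u ∈ s, f u = c) : IntegrableOn f s volume :=
  (integrableOn_const hvol.ne (by simp) : IntegrableOn (fun _ => c) s volume).congr_fun (fun x hx => (h x hx).symm) hs

lemma setIntegral_eq_const {f : ℝ → ℝ} {s : Set ℝ} (hs : MeasurableSet s)
    {c : ℝ} (h : ∀ u ∈ s, f u = c) : ∫ u in s, f u = (volume s).toReal * c := by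
  rw [setIntegral_congr_fun hs h, setIntegral_const, smul_eq_mul]
  rfl

lemma setIntegral_piecewise_const {f : ℝ → ℝ} {a m b c d : ℝ}
    (hab : a ≤ m) (hmb : m < b)
    (h1 : ∀ u ∈ Ioc a m, f u = c) (h2 : ∀ u ∈ Ioo m b, f u = d) :
    ∫ u in Ioo a b, f u = (m - a) * c + (b - m) * d := by
  rw [← Ioc_union_Ioo_eq_Ioo hab hmb,
    setIntegral_union (by exact fun t h1 h2 x hx => absurd ((h1 hx).2) (not_le.2 (h2 hx).1))
      measurableSet_Ioo
      (integrableOn_of_eq_const measurableSet_Ioc measure_Ioc_lt_top h1)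
      (integrableOn_of_eq_const measurableSet_Ioo measure_Ioo_lt_top h2),
    setIntegral_eq_const measurableSet_Ioc h1, setIntegral_eq_const measurableSet_Ioo h2,
    Real.volume_Ioc, Real.volume_Ioo, ENNReal.toReal_ofReal (by linarith),
    ENNReal.toReal_ofReal (by linarith)]

lemma map_const_restrict {s : Set ℝ} (hs : MeasurableSet s) {f : ℝ → ℝ} {c : ℝ}
    (h : ∀ u ∈ s, f u = c) :
    Measure.map f (volume.restrict s) = volume s • Measure.dirac c := by
  rw [Measure.map_congr (g := fun _ => c)
      (Filter.eventuallyEq_of_mem (self_mem_ae_restrict hs) h),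
    Measure.map_const, Measure.restrict_apply_univ]

lemma map_piecewise_const {f : ℝ → ℝ} (hf : Measurable f) {m c d : ℝ}
    (hm : 0 ≤ m) (hm1 : m < 1)
    (h1 : ∀ u ∈ Ioc (0:ℝ) m, f u = c) (h2 : ∀ u ∈ Ioo m 1, f u = d) :
    Measure.map f (volume.restrict (Ioo (0:ℝ) 1))
      = ENNReal.ofReal m • Measure.dirac c + ENNReal.ofReal (1-m) • Measure.dirac d := by
  rw [← Ioc_union_Ioo_eq_Ioo hm hm1,
    Measure.restrict_union (by exact fun t ha hb x hx => absurd ((ha hx).2) (not_le.2 ((hb hx).1)))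
      measurableSet_Ioo, Measure.map_add _ _ hf,
    map_const_restrict measurableSet_Ioc h1, map_const_restrict measurableSet_Ioo h2,
    Real.volume_Ioc, Real.volume_Ioo, sub_zero]

section Main

variable {α : ℝ}

lemma part1 (μ : Measure ℝ) (hμ : μ = Measure.dirac 0)
    (να : ℝ → Measure ℝ)
    (hνα : ∀ α : ℝ, να α
      = ENNReal.ofReal (1 - α) • Measure.dirac (-α ^ 2)
        + ENNReal.ofReal α • Measure.dirac 1)
    (hα : α ∈ Ioo (0:ℝ) 1) :
      proj_I (να α) (να α) = να α ∧
      proj_I μ (να α) = Measure.dirac (α * (1 - α * (1 - α))) ∧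
      Wp 1 (proj_I (να α) (να α)) (proj_I μ (να α))
        = 2 * (α + α ^ 2 * (α * (1 - α) - 1)) ∧
      Wp 1 μ (να α) = α + α ^ 2 * (1 - α) := by
  obtain ⟨hα0, hα1⟩ := hα
  have h1α : 0 < 1 - α := by linarith
  have qμ : ∀ u : ℝ, 0 < u → u ≤ 1 → quantile μ u = 0 := fun u h0 h1 => by
    rw [hμ]; exact quantile_dirac 0 h0 h1
  have qlow : ∀ u : ℝ, 0 < u → u ≤ 1 - α → quantile (να α) u = -α^2 := fun u h0 h1 => by
    rw [hνα]; exact quantile_nu_low ⟨hα0, hα1⟩ h0 h1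
  have qhigh : ∀ u : ℝ, 1 - α < u → u ≤ 1 → quantile (να α) u = 1 := fun u h0 h1 => by
    rw [hνα]; exact quantile_nu_high ⟨hα0, hα1⟩ h0 h1
  -- the trivial convex hull for (να, να)
  have hGnu : ∀ v : ℝ, Gfun (να α) (να α) v = 0 := fun v => by
    simp [Gfun]
  have hldnu : ∀ u ∈ Ioo (0:ℝ) 1,
      leftDeriv (convexHullFn (Icc 0 1) (Gfun (να α) (να α))) u = 0 := fun u hu =>
    leftDeriv_hull_line (hGnu 0) (hGnu 1)
      (fun x _ => by rw [hGnu x, zero_mul]) hu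
  -- A : proj_I (να α) (να α) = να α
  have hA : proj_I (να α) (να α) = να α := by
    rw [proj_I, Measure.map_congr (g := fun u => if u ≤ 1-α then -α^2 else (1:ℝ))
      (Filter.eventuallyEq_of_mem (self_mem_ae_restrict measurableSet_Ioo) ?_)]
    · rw [map_piecewise_const (Measurable.ite measurableSet_Iic
        measurable_const measurable_const) h1α.le (by linarith)
        (fun u hu => if_pos hu.2) (fun u hu => if_neg (not_le.2 hu.1)),
        show (1:ℝ) - (1-α) = α by ring, hνα]
    · intro u hu
      show quantile (να α) u - leftDeriv (convexHullFn (Icc 0 1) (Gfun (να α) (να α))) u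
        = if u ≤ 1 - α then -α ^ 2 else (1:ℝ)
      rw [hldnu u hu, sub_zero]
      by_cases h : u ≤ 1-α
      · rw [if_pos h, qlow u hu.1 h]
      · rw [if_neg h, qhigh u (not_le.1 h) hu.2.le]
  -- G for (μ, να)
  have hG0 : Gfun μ (να α) 0 = 0 := by simp [Gfun]
  have hGlow : ∀ v : ℝ, 0 < v → v ≤ 1 - α → Gfun μ (να α) v = α^2 * v := by
    intro v h0 h1
    rw [Gfun, setIntegral_eq_const measurableSet_Ioo
      (c := α^2) (fun u hu => by
        rw [qμ u hu.1 (by linarith [hu.2]), qlow u hu.1 (by linarith [hu.2])]; ring),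
      Real.volume_Ioo, sub_zero, ENNReal.toReal_ofReal h0.le, mul_comm]
  have hGhigh : ∀ v : ℝ, 1 - α < v → v ≤ 1 →
      Gfun μ (να α) v = α^2 * (1-α) - (v - (1-α)) := by
    intro v h0 h1
    rw [Gfun, setIntegral_piecewise_const (a := 0) (m := 1-α) (c := α^2) (d := -1)
      h1α.le h0
      (fun u hu => by
        rw [qμ u hu.1 (by linarith [hu.2]), qlow u hu.1 hu.2]; ring)
      (fun u hu => by
        rw [qμ u (by linarith [hu.1]) (by linarith [hu.2]),
          qhigh u hu.1 (by linarith [hu.2])]; ring)]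
    ring
  have hG1 : Gfun μ (να α) 1 = α^2*(1-α) - α := by
    rw [hGhigh 1 (by linarith) le_rfl]; ring
  have hGbound : ∀ x ∈ Icc (0:ℝ) 1, (α^2*(1-α) - α) * x ≤ Gfun μ (να α) x := by
    intro x hx
    rcases eq_or_lt_of_le hx.1 with h | h
    · rw [← h, hG0, mul_zero]
    · by_cases h2 : x ≤ 1 - α
      · rw [hGlow x h h2]
        nlinarith [mul_nonneg h.le (add_nonneg (pow_nonneg hα0.le 3) hα0.le)]
      · rw [hGhigh x (not_le.1 h2) hx.2]
        nlinarith [mul_nonneg (mul_nonneg (by linarith [hx.2] : (0:ℝ) ≤ 1 - x) h1α.le)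
          (by positivity : (0:ℝ) ≤ 1 + α^2)]
  have hld : ∀ u ∈ Ioo (0:ℝ) 1,
      leftDeriv (convexHullFn (Icc 0 1) (Gfun μ (να α))) u = α^2*(1-α) - α :=
    fun u hu => leftDeriv_hull_line hG0 hG1 hGbound hu
  -- B : proj_I μ (να α) = dirac c'
  have hc' : -(α^2*(1-α) - α) = α * (1 - α * (1 - α)) := by ring
  have hB : proj_I μ (να α) = Measure.dirac (α * (1 - α * (1 - α))) := by
    rw [proj_I, map_const_restrict measurableSet_Ioo (c := α * (1 - α * (1 - α)))
      (fun u hu => by rw [hld u hu, qμ u hu.1 hu.2.le]; ring),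
      Real.volume_Ioo, sub_zero, ENNReal.ofReal_one, one_smul]
  refine ⟨hA, hB, ?_, ?_⟩
  · -- W1 of projections
    set c' : ℝ := α * (1 - α * (1 - α)) with hc'def
    have hc'pos : 0 < c' := by rw [hc'def]; nlinarith
    have hc'lt : c' < 1 := by rw [hc'def]; nlinarith
    rw [hA, hB, Wp]
    have qd : ∀ u : ℝ, 0 < u → u ≤ 1 → quantile (Measure.dirac c') u = c' :=
      fun u h0 h1 => quantile_dirac c' h0 h1
    rw [setIntegral_piecewise_const (a := 0) (m := 1-α) (b := 1)
      (c := α^2 + c') (d := 1 - c') h1α.le (by linarith)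
      (fun u hu => by
        rw [qlow u hu.1 hu.2, qd u hu.1 (by linarith [hu.2]), Real.rpow_one,
          abs_of_nonpos (by nlinarith [hu.2])]; ring)
      (fun u hu => by
        rw [qhigh u hu.1 hu.2.le, qd u (by linarith [hu.1]) hu.2.le, Real.rpow_one,
          abs_of_nonneg (by linarith)])]
    rw [show (1:ℝ)/1 = 1 by norm_num, Real.rpow_one, hc'def]
    ring
  · -- W1 μ να
    rw [Wp]
    rw [setIntegral_piecewise_const (a := 0) (m := 1-α) (b := 1)
      (c := α^2) (d := 1) h1α.le (by linarith)
      (fun u hu => by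
        rw [qμ u hu.1 (by linarith [hu.2]), qlow u hu.1 hu.2, Real.rpow_one]
        rw [abs_of_nonneg (by nlinarith)]; ring)
      (fun u hu => by
        rw [qμ u (by linarith [hu.1]) hu.2.le, qhigh u hu.1 hu.2.le, Real.rpow_one,
          abs_of_nonpos (by norm_num)]; norm_num)]
    rw [show (1:ℝ)/1 = 1 by norm_num, Real.rpow_one]
    ring

end Main

end Aux

/-- sharpness of the factor 2 in the Lipschitz bound for `I` when `p = 1`:
with `μ = δ_0` and `ν^α = (1-α) δ_{-α²} + α δ_1`, one has `I(ν^α,ν^α) = ν^α`,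
`I(μ,ν^α) = δ_{α(1-α(1-α))}`, the stated values of the `W_1` distances, and the ratio
`W_1(I(ν^α,ν^α), I(μ,ν^α)) / W_1(μ,ν^α)` tends to `2` as `α → 0⁺`. -/
theorem factor_two_sharp (μ : Measure ℝ) (hμ : μ = Measure.dirac 0)
    (να : ℝ → Measure ℝ)
    (hνα : ∀ α : ℝ, να α
      = ENNReal.ofReal (1 - α) • Measure.dirac (-α ^ 2)
        + ENNReal.ofReal α • Measure.dirac 1) :
    (∀ α ∈ Ioo (0:ℝ) 1,
      proj_I (να α) (να α) = να α ∧
      proj_I μ (να α) = Measure.dirac (α * (1 - α * (1 - α))) ∧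
      Wp 1 (proj_I (να α) (να α)) (proj_I μ (να α))
        = 2 * (α + α ^ 2 * (α * (1 - α) - 1)) ∧
      Wp 1 μ (να α) = α + α ^ 2 * (1 - α)) ∧
    Tendsto
      (fun α => Wp 1 (proj_I (να α) (να α)) (proj_I μ (να α)) / Wp 1 μ (να α))
      (nhdsWithin 0 (Ioi 0)) (nhds 2) := by
  have hpart : ∀ α ∈ Ioo (0:ℝ) 1,
      proj_I (να α) (να α) = να α ∧
      proj_I μ (να α) = Measure.dirac (α * (1 - α * (1 - α))) ∧
      Wp 1 (proj_I (να α) (να α)) (proj_I μ (να α))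
        = 2 * (α + α ^ 2 * (α * (1 - α) - 1)) ∧
      Wp 1 μ (να α) = α + α ^ 2 * (1 - α) :=
    fun α hα => part1 μ hμ να hνα hα
  refine ⟨hpart, ?_⟩
  set t : ℝ → ℝ := fun α => 2 * (1 - α + α^2 - α^3) / (1 + α - α^2) with ht
  have hev : ∀ᶠ α in nhdsWithin (0:ℝ) (Ioi 0), α ∈ Ioo (0:ℝ) 1 :=
    mem_nhdsWithin.2 ⟨Iio 1, isOpen_Iio, by norm_num, fun x hx => ⟨hx.2, hx.1⟩⟩
  have heq : (fun α => Wp 1 (proj_I (να α) (να α)) (proj_I μ (να α)) / Wp 1 μ (να α))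
      =ᶠ[nhdsWithin (0:ℝ) (Ioi 0)] t := by
    filter_upwards [hev] with α hα
    rw [(hpart α hα).2.2.1, (hpart α hα).2.2.2,
      show 2 * (α + α ^ 2 * (α * (1 - α) - 1)) = α * (2 * (1 - α + α^2 - α^3)) by ring,
      show α + α ^ 2 * (1 - α) = α * (1 + α - α^2) by ring,
      mul_div_mul_left _ _ (ne_of_gt hα.1)]
  have hct : ContinuousAt t 0 := by
    apply ContinuousAt.div
    · fun_prop
    · fun_prop
    · norm_num
  have h2 : t 0 = 2 := by rw [ht]; norm_num
  exact Tendsto.congr' heq.symm (h2 ▸ hct.continuousWithinAt.tendsto)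

end
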